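/- arXiv:2212.10303 — 5 statements merged into one kernel-verified Lean document; each statement's English description precedes it below -/
import Mathlib

section
/- Let J ≥ 2 and let Ξ : (ℝ²)^J \ D_J → ℝ be defined by Ξ(z₁,…,z_J) = Σ_{i≠j} α_{ij} · ln(1/|z_i − z_j|), where D_J = {(z₁,…,z_J) : ∃ i ≠ j, z_i = z_j} and α_{ij} > 0 for all i ≠ j. Then Ξ has no critical points: for every (z₁,…,z_J) with pairwise distinct entries, the gradient of Ξ is nonzero. -/
/-- The functional `Ξ(z₁,…,z_J) = Σ_{i≠j} α_{ij} ln(1/|z_i − z_j|)` on the configuration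
space of `J ≥ 2` pairwise distinct points of `ℝ²` has no critical points: at every
configuration of pairwise distinct points its (total) derivative is nonzero. -/
theorem no_critical_points_plane (J : ℕ) (hJ : 2 ≤ J)
    (α : Fin J → Fin J → ℝ) (hα : ∀ i j, i ≠ j → 0 < α i j)
    (z : Fin J → EuclideanSpace ℝ (Fin 2)) (hz : Function.Injective z) :
    ¬ HasFDerivAt
        (fun w : Fin J → EuclideanSpace ℝ (Fin 2) =>
          ∑ i : Fin J, ∑ j : Fin J,
            if i = j then 0 else α i j * Real.log (1 / dist (w i) (w j)))
        (0 : (Fin J → EuclideanSpace ℝ (Fin 2)) →L[ℝ] ℝ) z := by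
  intro h
  set f : (Fin J → EuclideanSpace ℝ (Fin 2)) → ℝ := fun w =>
    ∑ i : Fin J, ∑ j : Fin J,
      if i = j then 0 else α i j * Real.log (1 / dist (w i) (w j)) with hf
  set S : ℝ := ∑ i : Fin J, ∑ j : Fin J, (if i = j then (0:ℝ) else α i j) with hS
  have hSpos : 0 < S := by
    have h01 : (⟨0, by omega⟩ : Fin J) ≠ ⟨1, by omega⟩ := by
      simp [Fin.ext_iff]
    refine Finset.sum_pos' (fun i _ => Finset.sum_nonneg fun j _ => ?_)
      ⟨⟨0, by omega⟩, Finset.mem_univ _, ?_⟩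
    · split
      · exact le_refl _
      · exact (hα _ _ (by assumption)).le
    · refine Finset.sum_pos' (fun j _ => ?_) ⟨⟨1, by omega⟩, Finset.mem_univ _, ?_⟩
      · split
        · exact le_refl _
        · exact (hα _ _ (by assumption)).le
      · rw [if_neg h01]
        exact hα _ _ h01
  -- the scaling path
  have hc : HasDerivAt (fun t : ℝ => (1 + t) • z) z 0 := by
    have h1 : HasDerivAt (fun t : ℝ => 1 + t) 1 0 := (hasDerivAt_id 0).const_add 1
    simpa using h1.smul_const z
  have hcomp : HasDerivAt (fun t : ℝ => f ((1 + t) • z)) 0 0 := by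
    have h2 := h.comp_hasDerivAt_of_eq 0 hc (by simp)
    simp only [ContinuousLinearMap.zero_apply] at h2
    exact h2
  -- eventually, f ((1+t) • z) = f z - S * log (1+t)
  have heq : (fun t : ℝ => f ((1 + t) • z)) =ᶠ[nhds 0]
      (fun t : ℝ => f z - S * Real.log (1 + t)) := by
    filter_upwards [Ioo_mem_nhds (by norm_num : (-1:ℝ) < 0) (by norm_num : (0:ℝ) < 1)]
      with t ht
    have hpos : 0 < 1 + t := by linarith [ht.1]
    have hterm : ∀ i j : Fin J, (if i = j then (0:ℝ)
        else α i j * Real.log (1 / dist (((1 + t) • z) i) (((1 + t) • z) j)))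
        = (if i = j then (0:ℝ) else α i j * Real.log (1 / dist (z i) (z j)))
          - (if i = j then (0:ℝ) else α i j) * Real.log (1 + t) := by
      intro i j
      by_cases hij : i = j
      · simp [hij]
      · have hd : dist (z i) (z j) ≠ 0 := dist_ne_zero.2 (fun e => hij (hz e))
        have hdist : dist (((1 + t) • z) i) (((1 + t) • z) j)
            = (1 + t) * dist (z i) (z j) := by
          simp [Pi.smul_apply, dist_smul₀, Real.norm_eq_abs, abs_of_pos hpos]
        rw [if_neg hij, if_neg hij, if_neg hij, hdist, one_div, Real.log_inv,
          Real.log_mul (ne_of_gt hpos) hd, one_div, Real.log_inv]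
        ring
    simp only [hf]
    calc (∑ i : Fin J, ∑ j : Fin J,
            if i = j then (0:ℝ) else α i j * Real.log (1 / dist (((1 + t) • z) i) (((1 + t) • z) j)))
        = ∑ i : Fin J, ∑ j : Fin J,
            ((if i = j then (0:ℝ) else α i j * Real.log (1 / dist (z i) (z j)))
              - (if i = j then (0:ℝ) else α i j) * Real.log (1 + t)) := by
          exact Finset.sum_congr rfl fun i _ => Finset.sum_congr rfl fun j _ => hterm i j
      _ = (∑ i : Fin J, ∑ j : Fin J,
            if i = j then (0:ℝ) else α i j * Real.log (1 / dist (z i) (z j)))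
          - S * Real.log (1 + t) := by
          simp [Finset.sum_sub_distrib, hS, Finset.sum_mul]
  have hcomp' : HasDerivAt (fun t : ℝ => f z - S * Real.log (1 + t)) 0 0 :=
    heq.hasDerivAt_iff.mp hcomp
  have hder : HasDerivAt (fun t : ℝ => f z - S * Real.log (1 + t)) (-S) 0 := by
    have h1 : HasDerivAt (fun t : ℝ => 1 + t) 1 0 := (hasDerivAt_id 0).const_add 1
    have hlog : HasDerivAt (fun t : ℝ => Real.log (1 + t)) 1 0 := by
      simpa using h1.log (by norm_num)
    simpa using (hlog.const_mul S).const_sub (f z)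
  have : (-S) = 0 := hder.unique hcomp'
  linarith
end

section
/- Let Ĥ = {(x,y) ∈ ℝ² : y > −L̂} be an open half-plane (L̂ > 0), J ≥ 1, α_{ij} > 0 for i ≠ j, and γ_i > 0 for 1 ≤ i ≤ J. Define Ξ(z₁,…,z_J) = Σ_{i≠j} α_{ij} ln(1/|z_i − z_j|) + Σ_i γ_i ln(1/d(z_i, ∂Ĥ)) on Ĥ^J minus the diagonal set D_J. Then Ξ has no critical points. -/
set_option maxHeartbeats 1600000


/-- On the upper half-plane `Ĥ = {(x,y) : y > −L̂}` (with `L̂ > 0`), the functional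
`Ξ(z₁,…,z_J) = Σ_{i≠j} α_{ij} ln(1/|z_i−z_j|) + Σ_i γ_i ln(1/d(z_i,∂Ĥ))`,
where `d(z,∂Ĥ) = z.y + L̂`, has no critical points on `Ĥ^J` minus the diagonal. -/
theorem no_critical_points_upper_half_plane (Lhat : ℝ) (hLhat : 0 < Lhat)
    (J : ℕ) (hJ : 1 ≤ J)
    (α : Fin J → Fin J → ℝ) (hα : ∀ i j, i ≠ j → 0 < α i j)
    (γ : Fin J → ℝ) (hγ : ∀ i, 0 < γ i)
    (z : Fin J → EuclideanSpace ℝ (Fin 2))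
    (hzH : ∀ i, -Lhat < z i 1) (hz : Function.Injective z) :
    ¬ HasFDerivAt
        (fun w : Fin J → EuclideanSpace ℝ (Fin 2) =>
          (∑ i : Fin J, ∑ j : Fin J,
            if i = j then 0 else α i j * Real.log (1 / dist (w i) (w j)))
          + ∑ i : Fin J, γ i * Real.log (1 / (w i 1 + Lhat)))
        (0 : (Fin J → EuclideanSpace ℝ (Fin 2)) →L[ℝ] ℝ) z := by
  intro hF
  classical
  obtain ⟨k, -, hk⟩ := Finset.exists_max_image (Finset.univ : Finset (Fin J))
      (fun i => z i 1) ⟨⟨0, hJ⟩, Finset.mem_univ _⟩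
  have hk' : ∀ i, z i 1 ≤ z k 1 := fun i => hk i (Finset.mem_univ i)
  have hL : ∀ i, 0 < z i 1 + Lhat := fun i => by linarith [hzH i]
  -- the direction: move the k-th point upwards
  set d : Fin J → ℝ := fun i => if i = k then 1 else 0 with hd
  set e : EuclideanSpace ℝ (Fin 2) := EuclideanSpace.single 1 1 with he
  set v : Fin J → EuclideanSpace ℝ (Fin 2) := fun i => d i • e with hv
  set c : ℝ → (Fin J → EuclideanSpace ℝ (Fin 2)) := fun t => z + t • v with hc
  have hc0 : c 0 = z := by simp [hc]
  have hcderiv : HasDerivAt c v 0 := by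
    have h1 : HasDerivAt (fun t : ℝ => t • v) v 0 := by
      simpa using (hasDerivAt_id (0 : ℝ)).smul_const v
    simpa [hc] using h1.const_add z
  -- coordinates of the curve
  have hcoord0 : ∀ t i, c t i 0 = z i 0 := by
    intro t i
    simp [hc, hv, he, Pi.add_apply, Pi.smul_apply, PiLp.add_apply, PiLp.smul_apply,
      EuclideanSpace.single_apply, smul_eq_mul]
  have hcoord1 : ∀ t i, c t i 1 = z i 1 + t * d i := by
    intro t i
    simp [hc, hv, he, Pi.add_apply, Pi.smul_apply, PiLp.add_apply, PiLp.smul_apply,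
      EuclideanSpace.single_apply, smul_eq_mul]
    try ring
  set A : Fin J → Fin J → ℝ := fun i j => z i 0 - z j 0 with hA
  set B : Fin J → Fin J → ℝ := fun i j => z i 1 - z j 1 with hB
  set C : Fin J → Fin J → ℝ := fun i j => d i - d j with hC
  set Q : Fin J → Fin J → ℝ := fun i j => (A i j) ^ 2 + (B i j) ^ 2 with hQdef
  have hQpos : ∀ i j, i ≠ j → 0 < Q i j := by
    intro i j hij
    have hzz : z i ≠ z j := fun h => hij (hz h)
    have hQe : Q i j = (z i 0 - z j 0) ^ 2 + (z i 1 - z j 1) ^ 2 := rfl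
    rw [hQe]
    have h0 : 0 ≤ (z i 0 - z j 0) ^ 2 + (z i 1 - z j 1) ^ 2 := by positivity
    rcases h0.lt_or_eq with h | h
    · exact h
    · exfalso
      have hA0 : z i 0 = z j 0 := by
        nlinarith [sq_nonneg (z i 0 - z j 0), sq_nonneg (z i 1 - z j 1)]
      have hB0 : z i 1 = z j 1 := by
        nlinarith [sq_nonneg (z i 0 - z j 0), sq_nonneg (z i 1 - z j 1)]
      apply hzz
      ext l
      fin_cases l
      · exact hA0
      · exact hB0
  -- the distance along the curve
  have hdist : ∀ t i j, dist (c t i) (c t j)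
      = Real.sqrt ((A i j) ^ 2 + (B i j + t * C i j) ^ 2) := by
    intro t i j
    rw [EuclideanSpace.dist_eq]
    congr 1
    rw [Fin.sum_univ_two]
    simp only [Real.dist_eq, sq_abs]
    rw [hcoord0, hcoord0, hcoord1, hcoord1]
    simp only [hA, hB, hC]
    ring
  -- the explicit one-variable function
  set g : ℝ → ℝ := fun t =>
    (∑ i : Fin J, ∑ j : Fin J,
      if i = j then 0 else
        (-(α i j) / 2) * Real.log ((A i j) ^ 2 + (B i j + t * C i j) ^ 2))
    + ∑ i : Fin J, (-(γ i)) * Real.log (z i 1 + t * d i + Lhat) with hg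
  have hfun : (fun t => (∑ i : Fin J, ∑ j : Fin J,
        if i = j then 0 else α i j * Real.log (1 / dist (c t i) (c t j)))
      + ∑ i : Fin J, γ i * Real.log (1 / (c t i 1 + Lhat))) = g := by
    funext t
    rw [hg]
    congr 1
    · refine Finset.sum_congr rfl fun i _ => Finset.sum_congr rfl fun j _ => ?_
      by_cases hij : i = j
      · simp [hij]
      · simp only [hij, if_false]
        rw [hdist, one_div, Real.log_inv, Real.log_sqrt (by positivity)]
        ring
    · refine Finset.sum_congr rfl fun i _ => ?_
      rw [hcoord1, one_div, Real.log_inv]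
      ring
  -- the derivative of g at 0, computed from hF
  have hg0 : HasDerivAt g 0 0 := by
    have h := (hc0 ▸ hF).comp_hasDerivAt 0 hcderiv
    simp only [ContinuousLinearMap.zero_apply] at h
    have h' : HasDerivAt (fun t => (∑ i : Fin J, ∑ j : Fin J,
        if i = j then 0 else α i j * Real.log (1 / dist (c t i) (c t j)))
      + ∑ i : Fin J, γ i * Real.log (1 / (c t i 1 + Lhat))) 0 0 := h
    rwa [hfun] at h'
  -- the derivative of g at 0, computed directly
  set D : ℝ :=
    (∑ i : Fin J, ∑ j : Fin J,
      if i = j then 0 else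
        (-(α i j) / 2) * ((2 * B i j * C i j) / Q i j))
    + ∑ i : Fin J, (-(γ i)) * (d i / (z i 1 + Lhat)) with hD
  have hgD : HasDerivAt g D 0 := by
    rw [hg, hD]
    apply HasDerivAt.add
    · apply HasDerivAt.fun_sum
      intro i _
      apply HasDerivAt.fun_sum
      intro j _
      by_cases hij : i = j
      · simp only [hij, if_pos rfl]
        exact hasDerivAt_const 0 0
      · simp only [hij, if_false]
        have h1 : HasDerivAt (fun t : ℝ => B i j + t * C i j) (C i j) 0 := by
          simpa using ((hasDerivAt_id (0 : ℝ)).mul_const (C i j)).const_add (B i j)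
        have h2 : HasDerivAt (fun t : ℝ => (A i j) ^ 2 + (B i j + t * C i j) ^ 2)
            (2 * B i j * C i j) 0 := by
          have := (h1.pow 2).const_add ((A i j) ^ 2)
          simpa using this
        have hne : (A i j) ^ 2 + (B i j + 0 * C i j) ^ 2 ≠ 0 := by
          have := hQpos i j hij
          simp only [hQdef] at this
          simpa using ne_of_gt this
        have h3 := (h2.log hne).const_mul (-(α i j) / 2)
        have hQ0 : (A i j) ^ 2 + (B i j + 0 * C i j) ^ 2 = Q i j := by
          simp [hQdef]
        rw [hQ0] at h3
        exact h3
    · apply HasDerivAt.fun_sum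
      intro i _
      have h1 : HasDerivAt (fun t : ℝ => z i 1 + t * d i + Lhat) (d i) 0 := by
        simpa using (((hasDerivAt_id (0 : ℝ)).mul_const (d i)).const_add (z i 1)).add_const Lhat
      have hne : z i 1 + 0 * d i + Lhat ≠ 0 := by
        have := hL i
        intro h
        rw [zero_mul, add_zero] at h
        linarith
      have h3 := (h1.log hne).const_mul (-(γ i))
      have : z i 1 + 0 * d i + Lhat = z i 1 + Lhat := by ring
      rw [this] at h3
      exact h3
  have hDzero : D = 0 := hgD.unique hg0
  -- but D < 0
  have hS1 : (∑ i : Fin J, ∑ j : Fin J,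
      if i = j then 0 else
        (-(α i j) / 2) * ((2 * B i j * C i j) / Q i j)) ≤ 0 := by
    apply Finset.sum_nonpos
    intro i _
    apply Finset.sum_nonpos
    intro j _
    by_cases hij : i = j
    · simp [hij]
    · simp only [hij, if_false]
      have hBC : 0 ≤ B i j * C i j := by
        by_cases hik : i = k
        · have hjk : j ≠ k := fun h => hij (hik.trans h.symm)
          have hdi : d i = 1 := by simp [hd, hik]
          have hdj : d j = 0 := by simp [hd, hjk]
          have hBnn : 0 ≤ B i j := by
            simp only [hB]
            subst hik
            linarith [hk' j]
          have : C i j = 1 := by simp [hC, hdi, hdj]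
          rw [this, mul_one]; exact hBnn
        · by_cases hjk : j = k
          · have hdi : d i = 0 := by simp [hd, hik]
            have hdj : d j = 1 := by simp [hd, hjk]
            have hBnp : B i j ≤ 0 := by
              simp only [hB]
              subst hjk
              linarith [hk' i]
            have : C i j = -1 := by simp [hC, hdi, hdj]
            rw [this]
            nlinarith [hBnp]
          · have : C i j = 0 := by simp [hC, hd, hik, hjk]
            simp [this]
      have hq := hQpos i j hij
      have hα' := hα i j hij
      have h1 : 0 ≤ (2 * B i j * C i j) / Q i j := by
        apply div_nonneg _ hq.le
        rw [mul_assoc]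
        exact mul_nonneg (by norm_num) hBC
      have h2 : -(α i j) / 2 ≤ 0 := by linarith
      exact mul_nonpos_of_nonpos_of_nonneg h2 h1
  have hS2 : (∑ i : Fin J, (-(γ i)) * (d i / (z i 1 + Lhat)))
      = -(γ k) * (1 / (z k 1 + Lhat)) := by
    rw [Finset.sum_eq_single k]
    · simp [hd]
    · intro i _ hik
      have : d i = 0 := by simp [hd, hik]
      simp [this]
    · intro h
      exact absurd (Finset.mem_univ k) h
  have hS2neg : (-(γ k)) * (1 / (z k 1 + Lhat)) < 0 := by
    have hLk := hL k
    have h1 : 0 < γ k * (1 / (z k 1 + Lhat)) :=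
      mul_pos (hγ k) (by positivity)
    linarith
  have : D < 0 := by
    rw [hD, hS2]
    linarith
  rw [hDzero] at this
  exact lt_irrefl 0 this
end

section
/- Let H = {(x,y) ∈ ℝ² : y < L} with L > 0, and let G_H(z,η) = (1/(2π)) ln(|z − η*|/|z − η|) be the Green's function of the half-plane, where η* is the reflection of η across the line y = L, and let H_H(z,z) = (1/(2π)) ln|z − z*| = (1/(2π)) ln(2(L − y)) for z = (x,y). For J ≥ 1, α_{ij} > 0 (i ≠ j), β_i > 0, the functional Ξ⁺(z₁,…,z_J) = Σ_{i≠j} α_{ij} G_H(z_i,z_j) + Σ_i β_i H_H(z_i,z_i), defined on H^J minus the diagonal, has no critical points. -/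
/-- Reflection of a point of `ℝ²` across the horizontal line `y = L`. -/
noncomputable def reflAcross (L : ℝ) (η : EuclideanSpace ℝ (Fin 2)) :
    EuclideanSpace ℝ (Fin 2) :=
  WithLp.toLp 2 (fun i => if i = 1 then 2 * L - η 1 else η i)

/-- Green's function of the half-plane `H = {y < L}`:
`G_H(z,η) = (1/(2π)) ln(|z−η*|/|z−η|)`, with `η*` the reflection of `η` across `y = L`. -/
noncomputable def greenHalfPlane (L : ℝ) (z η : EuclideanSpace ℝ (Fin 2)) : ℝ :=
  (1 / (2 * Real.pi)) * Real.log (dist z (reflAcross L η) / dist z η)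

/-- Robin function (regular part on the diagonal) of the half-plane `H = {y < L}`:
`H_H(z,z) = (1/(2π)) ln(2(L − y))` for `z = (x,y)`. -/
noncomputable def robinHalfPlane (L : ℝ) (z : EuclideanSpace ℝ (Fin 2)) : ℝ :=
  (1 / (2 * Real.pi)) * Real.log (2 * (L - z 1))

lemma dist_eucl2 (x y : EuclideanSpace ℝ (Fin 2)) :
    dist x y = Real.sqrt ((x 0 - y 0)^2 + (x 1 - y 1)^2) := by
  rw [EuclideanSpace.dist_eq, Fin.sum_univ_two]
  simp [Real.dist_eq, sq_abs]

/-- The functional `Ξ⁺ = Σ_{i≠j} α_{ij} G_H(z_i,z_j) + Σ_i β_i H_H(z_i,z_i)` on `H^J`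
minus the diagonal (`H = {y < L}`, `L > 0`) has no critical points. -/
theorem no_critical_points_green_plus (L : ℝ) (hL : 0 < L)
    (J : ℕ) (hJ : 1 ≤ J)
    (α : Fin J → Fin J → ℝ) (hα : ∀ i j, i ≠ j → 0 < α i j)
    (β : Fin J → ℝ) (hβ : ∀ i, 0 < β i)
    (z : Fin J → EuclideanSpace ℝ (Fin 2))
    (hzH : ∀ i, z i 1 < L) (hz : Function.Injective z) :
    ¬ HasFDerivAt
        (fun w : Fin J → EuclideanSpace ℝ (Fin 2) =>
          (∑ i : Fin J, ∑ j : Fin J,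
            if i = j then 0 else α i j * greenHalfPlane L (w i) (w j))
          + ∑ i : Fin J, β i * robinHalfPlane L (w i))
        (0 : (Fin J → EuclideanSpace ℝ (Fin 2)) →L[ℝ] ℝ) z := by
  intro h
  classical
  have pipos : (0:ℝ) < 1 / (2 * Real.pi) := by positivity
  set e : EuclideanSpace ℝ (Fin 2) := EuclideanSpace.single 1 (1:ℝ) with he
  have he0 : e 0 = 0 := by simp [he, EuclideanSpace.single_apply]
  have he1 : e 1 = 1 := by simp [he, EuclideanSpace.single_apply]
  -- the curve
  have hc : HasDerivAt (fun t : ℝ => z + t • (fun _ : Fin J => e)) (fun _ : Fin J => e) 0 := by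
    simpa using ((hasDerivAt_id (0:ℝ)).smul_const (fun _ : Fin J => e)).const_add z
  -- zero directional derivative from the hypothesis
  have h0 : HasDerivAt (fun t : ℝ =>
      (∑ i : Fin J, ∑ j : Fin J,
        if i = j then 0 else α i j * greenHalfPlane L (z i + t • e) (z j + t • e))
      + ∑ i : Fin J, β i * robinHalfPlane L (z i + t • e)) 0 0 := by
    have h' : HasFDerivAt
        (fun w : Fin J → EuclideanSpace ℝ (Fin 2) =>
          (∑ i : Fin J, ∑ j : Fin J,
            if i = j then 0 else α i j * greenHalfPlane L (w i) (w j))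
          + ∑ i : Fin J, β i * robinHalfPlane L (w i))
        (0 : (Fin J → EuclideanSpace ℝ (Fin 2)) →L[ℝ] ℝ)
        ((fun t : ℝ => z + t • (fun _ : Fin J => e)) 0) := by
      simpa using h
    have := h'.comp_hasDerivAt 0 hc
    exact this
  -- derivative of each Green term
  have green_deriv : ∀ i j : Fin J, i ≠ j →
      HasDerivAt (fun t : ℝ => α i j * greenHalfPlane L (z i + t • e) (z j + t • e))
        (α i j * ((1 / (2 * Real.pi)) *
          (4 * (z i 1 + z j 1 - 2*L) /
            ((z i 0 - z j 0)^2 + (z i 1 + z j 1 - 2*L)^2) / 2))) 0 := by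
    intro i j hij
    set a : ℝ := z i 0 - z j 0 with ha
    set b : ℝ := z i 1 + z j 1 - 2*L with hb
    have hbneg : b < 0 := by
      have h1 := hzH i; have h2 := hzH j
      rw [hb]; linarith
    have hbne : b ≠ 0 := ne_of_lt hbneg
    have hd : 0 < dist (z i) (z j) := dist_pos.2 (fun hzz => hij (hz hzz))
    have hlin : HasDerivAt (fun t : ℝ => b + 2*t) 2 0 := by
      simpa using ((hasDerivAt_id (0:ℝ)).const_mul 2).const_add b
    have hsq : HasDerivAt (fun t : ℝ => a^2 + (b + 2*t)^2) (4*b) 0 := by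
      have := (hlin.pow 2).const_add (a^2)
      convert this using 1
      · rfl
      · rfl
      · rfl
      · push_cast
        ring
    have hspos : (0:ℝ) < a^2 + (b + 2*0)^2 := by
      have : b + 2*0 = b := by ring
      rw [this]; positivity
    have hlog : HasDerivAt (fun t : ℝ => Real.log (a^2 + (b + 2*t)^2))
        (4*b / (a^2 + b^2)) 0 := by
      have := hsq.log (ne_of_gt hspos)
      convert this using 2
      ring
    have hg : HasDerivAt (fun t : ℝ => α i j * ((1/(2*Real.pi)) *
        (Real.log (a^2+(b+2*t)^2) / 2 - Real.log (dist (z i) (z j)))))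
        (α i j * ((1/(2*Real.pi)) * (4*b/(a^2+b^2)/2))) 0 :=
      (((hlog.div_const 2).sub_const _).const_mul _).const_mul _
    have hev : (fun t : ℝ => α i j * greenHalfPlane L (z i + t • e) (z j + t • e))
        =ᶠ[nhds 0] (fun t : ℝ => α i j * ((1/(2*Real.pi)) *
          (Real.log (a^2+(b+2*t)^2) / 2 - Real.log (dist (z i) (z j))))) := by
      have hcont : Continuous fun t : ℝ => b + 2*t := by continuity
      have hev0 : ∀ᶠ t : ℝ in nhds 0, b + 2*t < 0 :=
        (hcont.tendsto 0).eventually (gt_mem_nhds (by simpa using hbneg))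
      filter_upwards [hev0] with t ht
      have hbt : b + 2*t ≠ 0 := ne_of_lt ht
      have hspos' : (0:ℝ) < a^2 + (b+2*t)^2 := by positivity
      have hd1 : dist (z i + t • e) (z j + t • e) = dist (z i) (z j) :=
        dist_add_right (z i) (z j) (t • e)
      have hd2 : dist (z i + t • e) (reflAcross L (z j + t • e))
          = Real.sqrt (a^2 + (b + 2*t)^2) := by
        rw [dist_eucl2]
        congr 1
        have c0 : (z i + t • e) 0 - (reflAcross L (z j + t • e)) 0 = a := by
          simp [reflAcross, PiLp.add_apply, PiLp.smul_apply, smul_eq_mul, he0, ha]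
        have c1 : (z i + t • e) 1 - (reflAcross L (z j + t • e)) 1 = b + 2*t := by
          simp [reflAcross, PiLp.add_apply, PiLp.smul_apply, smul_eq_mul, he1, hb]
          ring
        rw [c0, c1]
      simp only [greenHalfPlane, hd1, hd2]
      rw [Real.log_div (ne_of_gt (Real.sqrt_pos.2 hspos')) (ne_of_gt hd),
        Real.log_sqrt (le_of_lt hspos')]
    exact hg.congr_of_eventuallyEq hev
  -- derivative of each Robin term
  have robin_deriv : ∀ i : Fin J,
      HasDerivAt (fun t : ℝ => β i * robinHalfPlane L (z i + t • e))
        (β i * ((1/(2*Real.pi)) * (-2 / (2*(L - z i 1))))) 0 := by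
    intro i
    have hlin : HasDerivAt (fun t : ℝ => 2*(L - (z i 1 + t))) (-2) 0 := by
      have := (((hasDerivAt_id (0:ℝ)).const_add (z i 1)).const_sub L).const_mul 2
      convert this using 1
      · rfl
      · rfl
      · rfl
      · ring
    have hpos : (0:ℝ) < 2*(L - (z i 1 + 0)) := by
      have := hzH i; rw [add_zero]; linarith
    have hlog : HasDerivAt (fun t : ℝ => Real.log (2*(L - (z i 1 + t))))
        (-2 / (2*(L - z i 1))) 0 := by
      have := hlin.log (ne_of_gt hpos)
      convert this using 2
      ring
    have hfun : (fun t : ℝ => β i * robinHalfPlane L (z i + t • e))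
        = fun t : ℝ => β i * ((1/(2*Real.pi)) * Real.log (2*(L - (z i 1 + t)))) := by
      funext t
      simp [robinHalfPlane, PiLp.add_apply, PiLp.smul_apply, smul_eq_mul, he1]
    rw [hfun]
    exact (hlog.const_mul _).const_mul _
  -- assemble the total derivative
  set Dg : Fin J → Fin J → ℝ := fun i j =>
    if i = j then 0 else α i j * ((1 / (2 * Real.pi)) *
      (4 * (z i 1 + z j 1 - 2*L) /
        ((z i 0 - z j 0)^2 + (z i 1 + z j 1 - 2*L)^2) / 2)) with hDg
  set Dr : Fin J → ℝ := fun i => β i * ((1/(2*Real.pi)) * (-2 / (2*(L - z i 1)))) with hDr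
  have hD : HasDerivAt (fun t : ℝ =>
      (∑ i : Fin J, ∑ j : Fin J,
        if i = j then 0 else α i j * greenHalfPlane L (z i + t • e) (z j + t • e))
      + ∑ i : Fin J, β i * robinHalfPlane L (z i + t • e))
      ((∑ i : Fin J, ∑ j : Fin J, Dg i j) + ∑ i : Fin J, Dr i) 0 := by
    apply HasDerivAt.add
    · apply HasDerivAt.fun_sum
      intro i _
      apply HasDerivAt.fun_sum
      intro j _
      by_cases hij : i = j
      · simpa [hDg, hij] using hasDerivAt_const (0:ℝ) (0:ℝ)
      · simpa [hDg, hij] using green_deriv i j hij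
    · exact HasDerivAt.fun_sum fun i _ => robin_deriv i
  have hzero : (∑ i : Fin J, ∑ j : Fin J, Dg i j) + ∑ i : Fin J, Dr i = 0 :=
    hD.unique h0
  -- negativity
  have hgle : (∑ i : Fin J, ∑ j : Fin J, Dg i j) ≤ 0 := by
    apply Finset.sum_nonpos
    intro i _
    apply Finset.sum_nonpos
    intro j _
    rw [hDg]
    by_cases hij : i = j
    · simp [hij]
    · simp only [hij, if_false]
      have hbneg : z i 1 + z j 1 - 2*L < 0 := by
        have := hzH i; have := hzH j; linarith
      have hden : (0:ℝ) < (z i 0 - z j 0)^2 + (z i 1 + z j 1 - 2*L)^2 := by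
        have : z i 1 + z j 1 - 2*L ≠ 0 := ne_of_lt hbneg
        positivity
      have hfrac : 4 * (z i 1 + z j 1 - 2*L) /
          ((z i 0 - z j 0)^2 + (z i 1 + z j 1 - 2*L)^2) / 2 < 0 := by
        apply div_neg_of_neg_of_pos _ (by norm_num)
        exact div_neg_of_neg_of_pos (by linarith) hden
      have := mul_neg_of_pos_of_neg pipos hfrac
      exact le_of_lt (mul_neg_of_pos_of_neg (hα i j hij) this)
  have hrlt : (∑ i : Fin J, Dr i) < 0 := by
    apply Finset.sum_neg _ ⟨(⟨0, hJ⟩ : Fin J), Finset.mem_univ _⟩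
    intro i _
    rw [hDr]
    have hpos : (0:ℝ) < 2*(L - z i 1) := by have := hzH i; linarith
    have : -2 / (2*(L - z i 1)) < 0 := div_neg_of_neg_of_pos (by norm_num) hpos
    exact mul_neg_of_pos_of_neg (hβ i) (mul_neg_of_pos_of_neg pipos this)
  linarith
end

section
/- Let H = {(x,y) ∈ ℝ² : y < L} with L > 0 and G_H, H_H as for the Green's function of the half-plane. For J ≥ 1, α_{ij} > 0 (i ≠ j), β_i > 0, the functional Ξ⁻(z₁,…,z_J) = Σ_{i≠j} α_{ij} G_H(z_i,z_j) − Σ_i β_i H_H(z_i,z_i), defined on H^J minus the diagonal, has no critical points. -/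
/-- The functional `Ξ⁻ = Σ_{i≠j} α_{ij} G_H(z_i,z_j) − Σ_i β_i H_H(z_i,z_i)` on `H^J`
minus the diagonal (`H = {y < L}`, `L > 0`) has no critical points. -/
theorem no_critical_points_green_minus (L : ℝ) (hL : 0 < L)
    (J : ℕ) (hJ : 1 ≤ J)
    (α : Fin J → Fin J → ℝ) (hα : ∀ i j, i ≠ j → 0 < α i j)
    (β : Fin J → ℝ) (hβ : ∀ i, 0 < β i)
    (z : Fin J → EuclideanSpace ℝ (Fin 2))
    (hzH : ∀ i, z i 1 < L) (hz : Function.Injective z) :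
    ¬ HasFDerivAt
        (fun w : Fin J → EuclideanSpace ℝ (Fin 2) =>
          (∑ i : Fin J, ∑ j : Fin J,
            if i = j then 0 else α i j * greenHalfPlane L (w i) (w j))
          - ∑ i : Fin J, β i * robinHalfPlane L (w i))
        (0 : (Fin J → EuclideanSpace ℝ (Fin 2)) →L[ℝ] ℝ) z := by
  intro hf
  haveI : Nonempty (Fin J) := Fin.pos_iff_nonempty.mp (by omega)
  set F : (Fin J → EuclideanSpace ℝ (Fin 2)) → ℝ := fun w =>
    (∑ i : Fin J, ∑ j : Fin J,
      if i = j then 0 else α i j * greenHalfPlane L (w i) (w j))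
    - ∑ i : Fin J, β i * robinHalfPlane L (w i) with hF
  set p : EuclideanSpace ℝ (Fin 2) := WithLp.toLp 2 (fun i : Fin 2 => if i = 1 then L else 0) with hp
  have hp1 : p 1 = L := by simp [hp]
  have hp0 : p 0 = 0 := by simp [hp]
  set v : Fin J → EuclideanSpace ℝ (Fin 2) := fun i => z i - p with hv
  set S : ℝ := ∑ i : Fin J, β i with hS
  have hSpos : 0 < S := Finset.sum_pos (fun i _ => hβ i) Finset.univ_nonempty
  set c : ℝ := S * (1 / (2 * Real.pi)) with hc
  have hcpos : 0 < c := by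
    have := Real.pi_pos
    rw [hc]; positivity
  -- the dilation path
  have hline : HasDerivAt (fun t : ℝ => z + t • v) v 0 := by
    simpa using ((hasDerivAt_id (0 : ℝ)).smul_const v).const_add z
  have hf0 : HasFDerivAt F (0 : (Fin J → EuclideanSpace ℝ (Fin 2)) →L[ℝ] ℝ)
      ((fun t : ℝ => z + t • v) 0) := by simpa using hf
  have hg : HasDerivAt (fun t : ℝ => F (z + t • v)) 0 0 := by
    exact (hf0.comp_hasDerivAt (0 : ℝ) hline).congr_deriv (by simp : _ = (0 : ℝ))
  -- key computation along the path
  have key : ∀ t : ℝ, -1 < t →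
      F (z + t • v) = F z - c * Real.log (1 + t) := by
    intro t ht
    have ht1 : 0 < 1 + t := by linarith
    have hsub : ∀ a b : Fin J, (z + t • v) a - (z + t • v) b = (1 + t) • (z a - z b) := by
      intro a b
      simp only [Pi.add_apply, Pi.smul_apply, hv]
      module
    have hrefl : ∀ a b : Fin J,
        (z + t • v) a - reflAcross L ((z + t • v) b)
          = (1 + t) • (z a - reflAcross L (z b)) := by
      intro a b
      ext k
      have h1 : ∀ (x : EuclideanSpace ℝ (Fin 2)) (k : Fin 2), (z a + t • (x)) k = z a k + t * x k := by
        intro x k; simp [PiLp.add_apply, PiLp.smul_apply]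
      fin_cases k <;>
        simp [reflAcross, hv, PiLp.sub_apply, PiLp.smul_apply, PiLp.add_apply,
          Pi.add_apply, Pi.smul_apply, hp1, hp0] <;> ring
    have hd1 : ∀ a b : Fin J,
        dist ((z + t • v) a) ((z + t • v) b) = (1 + t) * dist (z a) (z b) := by
      intro a b
      rw [dist_eq_norm, hsub a b, norm_smul, Real.norm_eq_abs, abs_of_pos ht1, dist_eq_norm]
    have hd2 : ∀ a b : Fin J,
        dist ((z + t • v) a) (reflAcross L ((z + t • v) b))
          = (1 + t) * dist (z a) (reflAcross L (z b)) := by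
      intro a b
      rw [dist_eq_norm, hrefl a b, norm_smul, Real.norm_eq_abs, abs_of_pos ht1, dist_eq_norm]
    have hgreen : ∀ a b : Fin J,
        greenHalfPlane L ((z + t • v) a) ((z + t • v) b) = greenHalfPlane L (z a) (z b) := by
      intro a b
      unfold greenHalfPlane
      rw [hd1, hd2, mul_div_mul_left _ _ (ne_of_gt ht1)]
    have hrob : ∀ a : Fin J,
        robinHalfPlane L ((z + t • v) a)
          = robinHalfPlane L (z a) + (1 / (2 * Real.pi)) * Real.log (1 + t) := by
      intro a
      have hLa : 0 < L - z a 1 := sub_pos.2 (hzH a)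
      have h1 : (z + t • v) a 1 = z a 1 + t * (z a 1 - L) := by
        simp [hv, Pi.add_apply, Pi.smul_apply, PiLp.add_apply, PiLp.smul_apply,
          PiLp.sub_apply, hp1]
      unfold robinHalfPlane
      rw [h1]
      have h2 : 2 * (L - (z a 1 + t * (z a 1 - L))) = (1 + t) * (2 * (L - z a 1)) := by ring
      rw [h2, Real.log_mul (ne_of_gt ht1) (by positivity)]
      ring
    simp only [hF]
    have e1 : (∑ i : Fin J, ∑ j : Fin J,
          if i = j then 0 else α i j * greenHalfPlane L ((z + t • v) i) ((z + t • v) j))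
        = ∑ i : Fin J, ∑ j : Fin J,
          if i = j then 0 else α i j * greenHalfPlane L (z i) (z j) := by
      refine Finset.sum_congr rfl fun i _ => Finset.sum_congr rfl fun j _ => ?_
      by_cases h : i = j
      · simp [h]
      · rw [if_neg h, if_neg h, hgreen i j]
    have e2 : (∑ i : Fin J, β i * robinHalfPlane L ((z + t • v) i))
        = (∑ i : Fin J, β i * robinHalfPlane L (z i)) + c * Real.log (1 + t) := by
      calc (∑ i : Fin J, β i * robinHalfPlane L ((z + t • v) i))
          = ∑ i : Fin J, (β i * robinHalfPlane L (z i)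
              + β i * ((1 / (2 * Real.pi)) * Real.log (1 + t))) :=
            Finset.sum_congr rfl fun i _ => by rw [hrob i]; ring
        _ = (∑ i : Fin J, β i * robinHalfPlane L (z i))
              + (∑ i : Fin J, β i) * ((1 / (2 * Real.pi)) * Real.log (1 + t)) := by
            rw [Finset.sum_add_distrib, ← Finset.sum_mul]
        _ = (∑ i : Fin J, β i * robinHalfPlane L (z i)) + c * Real.log (1 + t) := by
            rw [hc, hS]; ring
    rw [e1, e2]; ring
  -- explicit form has nonzero derivative
  have hEq : (fun t : ℝ => F (z + t • v)) =ᶠ[nhds 0]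
      (fun t : ℝ => F z - c * Real.log (1 + t)) := by
    filter_upwards [Metric.ball_mem_nhds (0 : ℝ) one_pos] with t ht
    rw [Metric.mem_ball, Real.dist_eq, sub_zero] at ht
    exact key t (by have := abs_lt.1 ht; linarith [this.1])
  have h1 : HasDerivAt (fun t : ℝ => 1 + t) 1 0 := (hasDerivAt_id 0).const_add 1
  have h2 : HasDerivAt (fun t : ℝ => Real.log (1 + t)) 1 0 := by
    simpa using h1.log (by norm_num)
  have hexp : HasDerivAt (fun t : ℝ => F z - c * Real.log (1 + t)) (-c) 0 := by
    simpa using (h2.const_mul c).const_sub (F z)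
  have hg' : HasDerivAt (fun t : ℝ => F (z + t • v)) (-c) 0 :=
    hexp.congr_of_eventuallyEq hEq
  have : (0 : ℝ) = -c := hg.unique hg'
  linarith
end

section
/- Let H = {y < L} and Ĥ = {y > −L̂} be half-planes in ℝ² with L, L̂ > 0. Let Ξ⁺ be as in the half-plane Green's function functional with positive coefficients α_{ij}, β_i, let γ_i ≥ 0, and let φ ∈ C¹(H ∩ Ĥ) satisfy ∇φ(z)·(0,1) ≤ 0 for all z ∈ H ∩ Ĥ. Then the functional Ξ(z₁,…,z_J) = Ξ⁺(z₁,…,z_J) + Σ_i γ_i φ(z_i), defined on (H ∩ Ĥ)^J minus the diagonal, has no critical points. -/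
/-- The vertical unit vector `(0,1)` in `ℝ²`. -/
noncomputable def e2vec : EuclideanSpace ℝ (Fin 2) := EuclideanSpace.single 1 (1:ℝ)

lemma line_hasDerivAt (w : EuclideanSpace ℝ (Fin 2)) :
    HasDerivAt (fun t : ℝ => w + t • e2vec) e2vec 0 := by
  simpa using ((hasDerivAt_id (0:ℝ)).smul_const e2vec).const_add w

lemma apply1_e2 (w : EuclideanSpace ℝ (Fin 2)) (t : ℝ) :
    (w + t • e2vec) 1 = w 1 + t := by
  simp [e2vec, EuclideanSpace.single_apply]

lemma green_deriv_aux (L : ℝ) (zi zj : EuclideanSpace ℝ (Fin 2))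
    (hi : zi 1 < L) (hj : zj 1 < L) (hne : zi ≠ zj) :
    HasDerivAt (fun t : ℝ => greenHalfPlane L (zi + t • e2vec) (zj + t • e2vec))
      ((1 / (2 * Real.pi)) *
        (2 * (zi 1 + zj 1 - 2 * L) /
          ((zi 0 - zj 0) ^ 2 + (zi 1 + zj 1 - 2 * L) ^ 2))) 0 := by
  set a : ℝ := zi 0 - zj 0 with ha
  set b : ℝ := zi 1 + zj 1 - 2 * L with hb
  have hbneg : b < 0 := by rw [hb]; linarith
  have hd0 : (0:ℝ) < dist zi zj := dist_pos.2 hne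
  have hlin : HasDerivAt (fun t : ℝ => b + 2 * t) 2 0 := by
    simpa using ((hasDerivAt_id (0:ℝ)).const_mul 2).const_add b
  have hqd : HasDerivAt (fun t : ℝ => a ^ 2 + (b + 2 * t) ^ 2) (4 * b) 0 := by
    have h := (hlin.pow 2).const_add (a ^ 2)
    convert h using 1
    rfl
    rfl
    norm_num; ring
  have hne0 : a ^ 2 + (b + 2 * (0:ℝ)) ^ 2 ≠ 0 := by
    have : (0:ℝ) < a ^ 2 + (b + 2 * 0) ^ 2 := by nlinarith
    exact ne_of_gt this
  have hlog : HasDerivAt (fun t : ℝ => Real.log (a ^ 2 + (b + 2 * t) ^ 2))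
      (4 * b / (a ^ 2 + b ^ 2)) 0 := by
    have h := hqd.log hne0
    simpa using h
  have hg : HasDerivAt
      (fun t : ℝ => (1 / (2 * Real.pi)) *
        (Real.log (a ^ 2 + (b + 2 * t) ^ 2) / 2 - Real.log (dist zi zj)))
      ((1 / (2 * Real.pi)) * (2 * b / (a ^ 2 + b ^ 2))) 0 := by
    have h := ((hlog.div_const 2).sub_const (Real.log (dist zi zj))).const_mul
      (1 / (2 * Real.pi))
    convert h using 1
    rfl
    rfl
    ring
  apply hg.congr_of_eventuallyEq
  have htend : Filter.Tendsto (fun t : ℝ => b + 2 * t) (nhds 0) (nhds (b + 2 * 0)) :=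
    (continuous_const.add (continuous_const.mul continuous_id)).tendsto 0
  have hlt : ∀ᶠ t : ℝ in nhds 0, b + 2 * t < 0 :=
    htend.eventually_lt_const (by linarith)
  filter_upwards [hlt] with t ht
  have hdref : dist (zi + t • e2vec) (reflAcross L (zj + t • e2vec))
      = Real.sqrt (a ^ 2 + (b + 2 * t) ^ 2) := by
    rw [EuclideanSpace.dist_eq]
    congr 1
    rw [Fin.sum_univ_two]
    simp [Real.dist_eq, reflAcross, e2vec, EuclideanSpace.single_apply, sq_abs, ha, hb]
    ring
  have hdist : dist (zi + t • e2vec) (zj + t • e2vec) = dist zi zj := by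
    simp [dist_add_right]
  have hs : (0:ℝ) < a ^ 2 + (b + 2 * t) ^ 2 := by nlinarith
  rw [greenHalfPlane, hdref, hdist,
    Real.log_div (ne_of_gt (Real.sqrt_pos.2 hs)) (ne_of_gt hd0),
    Real.log_sqrt (le_of_lt hs)]

lemma robin_deriv_aux (L : ℝ) (zi : EuclideanSpace ℝ (Fin 2)) (hi : zi 1 < L) :
    HasDerivAt (fun t : ℝ => robinHalfPlane L (zi + t • e2vec))
      ((1 / (2 * Real.pi)) * (-(1 / (L - zi 1)))) 0 := by
  have heq : (fun t : ℝ => robinHalfPlane L (zi + t • e2vec))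
      = fun t => (1 / (2 * Real.pi)) * Real.log (2 * (L - (zi 1 + t))) := by
    funext t; rw [robinHalfPlane, apply1_e2]
  rw [heq]
  have hlin : HasDerivAt (fun t : ℝ => 2 * (L - (zi 1 + t))) (-2) 0 := by
    have h : HasDerivAt (fun t : ℝ => L - (zi 1 + t)) (-1) 0 := by
      simpa using ((hasDerivAt_id (0:ℝ)).const_add (zi 1)).const_sub L
    simpa using h.const_mul 2
  have hne : 2 * (L - (zi 1 + (0:ℝ))) ≠ 0 := by
    have : (0:ℝ) < 2 * (L - (zi 1 + 0)) := by linarith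
    exact ne_of_gt this
  have h := (hlin.log hne).const_mul (1 / (2 * Real.pi))
  convert h using 1
  have h0 : L - zi 1 ≠ 0 := by intro h'; linarith [sub_eq_zero.mp h']
  rfl
  rfl
  rw [add_zero]
  field_simp

/-- On the strip `H ∩ Ĥ = {−L̂ < y < L}`, the functional
`Ξ = Σ_{i≠j} α_{ij} G_H(z_i,z_j) + Σ_i β_i H_H(z_i,z_i) + Σ_i γ_i φ(z_i)`,
where `γ_i ≥ 0` and `φ` is `C¹` on the strip with `∇φ·(0,1) ≤ 0`, has no
critical points on `(H ∩ Ĥ)^J` minus the diagonal. -/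
theorem no_critical_points_green_plus_phi (L Lhat : ℝ) (hL : 0 < L) (hLhat : 0 < Lhat)
    (J : ℕ) (hJ : 1 ≤ J)
    (α : Fin J → Fin J → ℝ) (hα : ∀ i j, i ≠ j → 0 < α i j)
    (β : Fin J → ℝ) (hβ : ∀ i, 0 < β i)
    (γ : Fin J → ℝ) (hγ : ∀ i, 0 ≤ γ i)
    (φ : EuclideanSpace ℝ (Fin 2) → ℝ)
    (φ' : EuclideanSpace ℝ (Fin 2) → (EuclideanSpace ℝ (Fin 2) →L[ℝ] ℝ))
    (hφdiff : ∀ w : EuclideanSpace ℝ (Fin 2), -Lhat < w 1 → w 1 < L →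
      HasFDerivAt φ (φ' w) w)
    (hφcont : ∀ w : EuclideanSpace ℝ (Fin 2), -Lhat < w 1 → w 1 < L →
      ContinuousWithinAt φ' {v : EuclideanSpace ℝ (Fin 2) | -Lhat < v 1 ∧ v 1 < L} w)
    (hφmono : ∀ w : EuclideanSpace ℝ (Fin 2), -Lhat < w 1 → w 1 < L →
      φ' w (EuclideanSpace.single 1 1) ≤ 0)
    (z : Fin J → EuclideanSpace ℝ (Fin 2))
    (hzH : ∀ i, z i 1 < L) (hzHhat : ∀ i, -Lhat < z i 1)
    (hz : Function.Injective z) :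
    ¬ HasFDerivAt
        (fun w : Fin J → EuclideanSpace ℝ (Fin 2) =>
          (∑ i : Fin J, ∑ j : Fin J,
            if i = j then 0 else α i j * greenHalfPlane L (w i) (w j))
          + ∑ i : Fin J, β i * robinHalfPlane L (w i)
          + ∑ i : Fin J, γ i * φ (w i))
        (0 : (Fin J → EuclideanSpace ℝ (Fin 2)) →L[ℝ] ℝ) z := by
  intro h
  have hpi : (0:ℝ) < 1 / (2 * Real.pi) := by positivity
  set v : Fin J → EuclideanSpace ℝ (Fin 2) := fun _ => e2vec with hv
  have hc : HasDerivAt (fun t : ℝ => z + t • v) v 0 := by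
    simpa using ((hasDerivAt_id (0:ℝ)).smul_const v).const_add z
  have h1 : HasDerivAt
      (fun t : ℝ =>
        (∑ i : Fin J, ∑ j : Fin J,
          if i = j then 0 else α i j * greenHalfPlane L ((z + t • v) i) ((z + t • v) j))
        + ∑ i : Fin J, β i * robinHalfPlane L ((z + t • v) i)
        + ∑ i : Fin J, γ i * φ ((z + t • v) i)) (0:ℝ) 0 := by
    have h' := h.comp_hasDerivAt_of_eq 0 hc (by simp)
    exact h'
  -- the explicit derivative
  have hG : HasDerivAt
      (fun t : ℝ => ∑ i : Fin J, ∑ j : Fin J,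
        if i = j then 0 else α i j * greenHalfPlane L ((z + t • v) i) ((z + t • v) j))
      (∑ i : Fin J, ∑ j : Fin J,
        if i = j then 0 else α i j * ((1 / (2 * Real.pi)) *
          (2 * (z i 1 + z j 1 - 2 * L) /
            ((z i 0 - z j 0) ^ 2 + (z i 1 + z j 1 - 2 * L) ^ 2)))) 0 := by
    apply HasDerivAt.fun_sum
    intro i _
    apply HasDerivAt.fun_sum
    intro j _
    by_cases hij : i = j
    · simpa [hij] using hasDerivAt_const (0:ℝ) (0:ℝ)
    · rw [if_neg hij]
      simp only [if_neg hij]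
      exact (green_deriv_aux L (z i) (z j) (hzH i) (hzH j) (hz.ne hij)).const_mul (α i j)
  have hR : HasDerivAt
      (fun t : ℝ => ∑ i : Fin J, β i * robinHalfPlane L ((z + t • v) i))
      (∑ i : Fin J, β i * ((1 / (2 * Real.pi)) * (-(1 / (L - z i 1))))) 0 := by
    apply HasDerivAt.fun_sum
    intro i _
    exact (robin_deriv_aux L (z i) (hzH i)).const_mul (β i)
  have hP : HasDerivAt
      (fun t : ℝ => ∑ i : Fin J, γ i * φ ((z + t • v) i))
      (∑ i : Fin J, γ i * (φ' (z i) e2vec)) 0 := by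
    apply HasDerivAt.fun_sum
    intro i _
    have hcomp : HasDerivAt (fun t : ℝ => φ (z i + t • e2vec)) (φ' (z i) e2vec) 0 :=
      (hφdiff (z i) (hzHhat i) (hzH i)).comp_hasDerivAt_of_eq 0 (line_hasDerivAt (z i))
        (by simp)
    exact hcomp.const_mul (γ i)
  have h2 := (hG.add hR).add hP
  have hDeq := h2.unique h1
  -- now derive a contradiction from the sign of the derivative
  have hGle : (∑ i : Fin J, ∑ j : Fin J,
      if i = j then 0 else α i j * ((1 / (2 * Real.pi)) *
        (2 * (z i 1 + z j 1 - 2 * L) /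
          ((z i 0 - z j 0) ^ 2 + (z i 1 + z j 1 - 2 * L) ^ 2)))) ≤ 0 := by
    apply Finset.sum_nonpos
    intro i _
    apply Finset.sum_nonpos
    intro j _
    by_cases hij : i = j
    · simp [hij]
    · rw [if_neg hij]
      have hbneg : z i 1 + z j 1 - 2 * L < 0 := by linarith [hzH i, hzH j]
      have hdiv : 2 * (z i 1 + z j 1 - 2 * L) /
          ((z i 0 - z j 0) ^ 2 + (z i 1 + z j 1 - 2 * L) ^ 2) ≤ 0 :=
        div_nonpos_of_nonpos_of_nonneg (by linarith) (by positivity)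
      have h2' : (1 / (2 * Real.pi)) *
          (2 * (z i 1 + z j 1 - 2 * L) /
            ((z i 0 - z j 0) ^ 2 + (z i 1 + z j 1 - 2 * L) ^ 2)) ≤ 0 :=
        mul_nonpos_iff.2 (Or.inl ⟨le_of_lt hpi, hdiv⟩)
      exact mul_nonpos_iff.2 (Or.inl ⟨le_of_lt (hα i j hij), h2'⟩)
  have hRlt : (∑ i : Fin J, β i * ((1 / (2 * Real.pi)) * (-(1 / (L - z i 1))))) < 0 := by
    have hne : (Finset.univ : Finset (Fin J)).Nonempty := by
      have : Nonempty (Fin J) := ⟨⟨0, hJ⟩⟩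
      exact Finset.univ_nonempty
    have hterm : ∀ i ∈ (Finset.univ : Finset (Fin J)),
        β i * ((1 / (2 * Real.pi)) * (-(1 / (L - z i 1)))) < 0 := by
      intro i _
      have hLi : 0 < L - z i 1 := by linarith [hzH i]
      have hin : (1 / (2 * Real.pi)) * (-(1 / (L - z i 1))) < 0 :=
        mul_neg_of_pos_of_neg hpi (neg_lt_zero.2 (by positivity))
      exact mul_neg_of_pos_of_neg (hβ i) hin
    calc (∑ i : Fin J, β i * ((1 / (2 * Real.pi)) * (-(1 / (L - z i 1)))))
        < ∑ _i : Fin J, (0:ℝ) := Finset.sum_lt_sum_of_nonempty hne hterm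
      _ = 0 := by simp
  have hPle : (∑ i : Fin J, γ i * (φ' (z i) e2vec)) ≤ 0 := by
    apply Finset.sum_nonpos
    intro i _
    exact mul_nonpos_iff.2 (Or.inl ⟨hγ i, hφmono (z i) (hzHhat i) (hzH i)⟩)
  linarith [hDeq, hGle, hRlt, hPle]
end
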